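/- Let V be a 2-dimensional Q-vector subspace of C (spanned by two R-linearly independent complex numbers). If V contains two distinct right angles, i.e. there exist two pairs (v1,v2) and (w1,w2) of R-linearly independent elements of V, defining distinct angles, with v2/v1 and w2/w1 purely imaginary, then V is homothetic to an imaginary quadratic field, i.e. there exists λ ∈ C* such that λV is an imaginary quadratic subfield of C. -/

import Mathlib

open IntermediateField Polynomial

lemma range_pair (a b : ℂ) : Set.range ![a, b] = {a, b} := by
  simp [Matrix.range_cons, Matrix.range_empty, Set.pair_comm]

lemma ratLI {a b : ℂ} (h : LinearIndependent ℝ ![a, b]) : LinearIndependent ℚ ![a, b] :=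
  h.restrict_scalars (by
    intro x y hxy
    have : (x : ℝ) = (y : ℝ) := by simpa using hxy
    exact_mod_cast this)

lemma finrank_span_pair {a b : ℂ} (h : LinearIndependent ℚ ![a, b]) :
    Module.finrank ℚ (Submodule.span ℚ ({a, b} : Set ℂ)) = 2 := by
  have := finrank_span_eq_card h
  rwa [range_pair, Fintype.card_fin] at this



/-- Let `V` be a space (the `ℚ`-span in `ℂ` of two `ℝ`-linearly independent
complex numbers).  If `V` contains two distinct right angles — two pairs `(v₁, v₂)`, `(w₁, w₂)`
of `ℝ`-linearly independent elements of `V`, defining distinct angles, with `v₂/v₁` and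
`w₂/w₁` purely imaginary — then `V` is homothetic to an imaginary quadratic field:
there are `l ∈ ℂ*` and a subfield `K` of `ℂ` with `[K : ℚ] = 2` and `K ⊄ ℝ`
such that `l • V = K`. -/
theorem two_right_angles_CM (V : Submodule ℚ ℂ)
    (hV : ∃ a b : ℂ, LinearIndependent ℝ ![a, b] ∧ V = Submodule.span ℚ ({a, b} : Set ℂ))
    (v₁ v₂ w₁ w₂ : ℂ)
    (hv₁ : v₁ ∈ V) (hv₂ : v₂ ∈ V) (hw₁ : w₁ ∈ V) (hw₂ : w₂ ∈ V)
    (hvind : LinearIndependent ℝ ![v₁, v₂]) (hwind : LinearIndependent ℝ ![w₁, w₂])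
    (hvim : (v₂ / v₁).re = 0) (hwim : (w₂ / w₁).re = 0)
    (hdist : ¬ ∃ q₁ q₂ : ℚ, q₁ ≠ 0 ∧ q₂ ≠ 0 ∧
      ((w₁ = (q₁ : ℂ) * v₁ ∧ w₂ = (q₂ : ℂ) * v₂) ∨
        (w₁ = (q₁ : ℂ) * v₂ ∧ w₂ = (q₂ : ℂ) * v₁))) :
    ∃ (l : ℂ) (K : Subfield ℂ), l ≠ 0 ∧ Module.finrank ℚ ↥K = 2 ∧
      (∃ z ∈ K, z.im ≠ 0) ∧ (fun z : ℂ => l * z) '' (V : Set ℂ) = (K : Set ℂ) := by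
  -- nonvanishing
  have hv1ne : v₁ ≠ 0 := by simpa using hvind.ne_zero 0
  have hv2ne : v₂ ≠ 0 := by simpa using hvind.ne_zero 1
  have hw1ne : w₁ ≠ 0 := by simpa using hwind.ne_zero 0
  have hw2ne : w₂ ≠ 0 := by simpa using hwind.ne_zero 1
  set u : ℂ := v₂ / v₁ with hu
  have hune : u ≠ 0 := div_ne_zero hv2ne hv1ne
  set t : ℝ := u.im with ht
  have htne : t ≠ 0 := by
    intro h0
    exact hune (Complex.ext hvim h0)
  set x : ℝ := v₁.re
  set y : ℝ := v₁.im
  have hxy : x ^ 2 + y ^ 2 ≠ 0 := by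
    intro h0
    apply hv1ne
    have hx : x = 0 := by nlinarith [sq_nonneg x, sq_nonneg y]
    have hy : y = 0 := by nlinarith [sq_nonneg x, sq_nonneg y]
    exact Complex.ext (by simpa using hx) (by simpa using hy)
  have hv2eq : v₂ = u * v₁ := (div_mul_cancel₀ v₂ hv1ne).symm
  have hv2re : v₂.re = -(t * y) := by
    rw [hv2eq, Complex.mul_re, hvim]; ring
  have hv2im : v₂.im = t * x := by
    rw [hv2eq, Complex.mul_im, hvim]; ring
  -- V = span {v₁, v₂}
  obtain ⟨a, b, hab, hVe⟩ := hV
  haveI : FiniteDimensional ℚ V := by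
    rw [hVe]; exact FiniteDimensional.span_of_finite ℚ (Set.toFinite _)
  have hle : Submodule.span ℚ ({v₁, v₂} : Set ℂ) ≤ V := by
    rw [Submodule.span_le]; intro z hz
    rcases hz with rfl | hz
    · exact hv₁
    · rcases hz with rfl; exact hv₂
  have hVspan : V = Submodule.span ℚ ({v₁, v₂} : Set ℂ) := by
    have h1 : Module.finrank ℚ (Submodule.span ℚ ({v₁, v₂} : Set ℂ)) = 2 :=
      finrank_span_pair (ratLI hvind)
    have h2 : Module.finrank ℚ V = 2 := by
      rw [hVe]; exact finrank_span_pair (ratLI hab)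
    exact (Submodule.eq_of_le_of_finrank_eq hle (h1.trans h2.symm)).symm
  -- coordinates of w₁ w₂
  obtain ⟨p, q, hw1e⟩ := Submodule.mem_span_pair.mp (hVspan ▸ hw₁)
  obtain ⟨r, s, hw2e⟩ := Submodule.mem_span_pair.mp (hVspan ▸ hw₂)
  have hw1re : w₁.re = (p : ℝ) * x - q * (t * y) := by
    rw [← hw1e]; simp only [Rat.smul_def, Complex.add_re, Complex.mul_re, hv2re, Complex.ratCast_re, Complex.ratCast_im]; ring
  have hw1im : w₁.im = (p : ℝ) * y + q * (t * x) := by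
    rw [← hw1e]; simp only [Rat.smul_def, Complex.add_im, Complex.mul_im, hv2im, Complex.ratCast_re, Complex.ratCast_im]; ring
  have hw2re : w₂.re = (r : ℝ) * x - s * (t * y) := by
    rw [← hw2e]; simp only [Rat.smul_def, Complex.add_re, Complex.mul_re, hv2re, Complex.ratCast_re, Complex.ratCast_im]; ring
  have hw2im : w₂.im = (r : ℝ) * y + s * (t * x) := by
    rw [← hw2e]; simp only [Rat.smul_def, Complex.add_im, Complex.mul_im, hv2im, Complex.ratCast_re, Complex.ratCast_im]; ring
  -- the orthogonality equation
  have hE : w₂.re * w₁.re + w₂.im * w₁.im = 0 := by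
    have hns : Complex.normSq w₁ ≠ 0 := by
      simpa [Complex.normSq_eq_zero] using hw1ne
    have := hwim
    rw [Complex.div_re] at this
    field_simp at this
    linarith
  have hkey : ((p : ℝ) * r + q * s * t ^ 2) * (x ^ 2 + y ^ 2) = 0 := by
    rw [hw1re, hw1im, hw2re, hw2im] at hE
    linear_combination hE
  have hPQ : (p : ℝ) * r + (q : ℝ) * s * t ^ 2 = 0 :=
    (mul_eq_zero.mp hkey).resolve_right hxy
  -- smul to mul
  have hsm : ∀ (c : ℚ) (z : ℂ), c • z = (c : ℂ) * z := fun c z => Rat.smul_def c z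
  -- nonvanishing of coefficients
  have hqs : q ≠ 0 ∧ s ≠ 0 := by
    constructor
    · intro hq0
      have hp0 : p ≠ 0 := by
        intro hp0; apply hw1ne; rw [← hw1e, hp0, hq0]; simp
      have hr0 : r = 0 := by
        have : (p : ℝ) * r = 0 := by rw [hq0] at hPQ; push_cast at hPQ; linarith
        have : (p : ℚ) * r = 0 := by exact_mod_cast this
        rcases mul_eq_zero.mp this with h | h
        · exact absurd h hp0
        · exact h
      have hs0 : s ≠ 0 := by
        intro hs0; apply hw2ne; rw [← hw2e, hr0, hs0]; simp
      exact absurd ⟨p, s, hp0, hs0, Or.inl ⟨by rw [← hw1e, hq0]; simp [hsm],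
        by rw [← hw2e, hr0]; simp [hsm]⟩⟩ hdist
    · intro hs0
      have hr0 : r ≠ 0 := by
        intro hr0; apply hw2ne; rw [← hw2e, hr0, hs0]; simp
      have hp0 : p = 0 := by
        have : (p : ℝ) * r = 0 := by rw [hs0] at hPQ; push_cast at hPQ; linarith
        have : (p : ℚ) * r = 0 := by exact_mod_cast this
        rcases mul_eq_zero.mp this with h | h
        · exact h
        · exact absurd h hr0
      have hq0 : q ≠ 0 := by
        intro hq0; apply hw1ne; rw [← hw1e, hp0, hq0]; simp
      exact absurd ⟨q, r, hq0, hr0, Or.inr ⟨by rw [← hw1e, hp0]; simp [hsm],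
        by rw [← hw2e, hs0]; simp [hsm]⟩⟩ hdist
  obtain ⟨hq, hs⟩ := hqs
  have hp : p ≠ 0 := by
    intro hp0
    have : (q : ℝ) * s * t ^ 2 = 0 := by rw [hp0] at hPQ; push_cast at hPQ; linarith
    rcases mul_eq_zero.mp this with h | h
    · have : (q : ℚ) * s = 0 := by exact_mod_cast h
      rcases mul_eq_zero.mp this with h' | h'
      · exact hq h'
      · exact hs h'
    · exact htne (pow_eq_zero_iff two_ne_zero |>.mp h)
  -- t² is rational
  set c : ℚ := -(p * r) / (q * s) with hc
  have hcpos : (c : ℝ) = t ^ 2 := by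
    have hqs' : (q : ℝ) * s ≠ 0 :=
      mul_ne_zero (by exact_mod_cast hq) (by exact_mod_cast hs)
    rw [hc]; push_cast
    field_simp
    linarith [hPQ]
  -- u² = -c
  have hu2 : u ^ 2 = -(c : ℂ) := by
    apply Complex.ext
    · rw [pow_two, Complex.mul_re, hvim]
      simp only [Complex.neg_re, Complex.ratCast_re]
      rw [hcpos, ht]; ring
    · rw [pow_two, Complex.mul_im, hvim]
      simp [Complex.neg_im, Complex.ratCast_im]
  -- u is integral with minimal polynomial of degree 2
  have hint : IsIntegral ℚ u := by
    refine ⟨X ^ 2 + C c, monic_X_pow_add_C c two_ne_zero, ?_⟩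
    simp [hu2]
  have hnotrange : u ∉ Set.range (algebraMap ℚ ℂ) := by
    rintro ⟨q0, hq0⟩
    apply htne
    rw [ht, ← hq0]
    simp [Complex.ratCast_im]
  have hmindeg : (minpoly ℚ u).natDegree = 2 := by
    have hle2 : (minpoly ℚ u).natDegree ≤ 2 := by
      have hne : (X ^ 2 + C c : ℚ[X]) ≠ 0 := (monic_X_pow_add_C c two_ne_zero).ne_zero
      have := minpoly.degree_le_of_ne_zero ℚ u hne (by simp [hu2])
      have hdeg : (X ^ 2 + C c : ℚ[X]).degree = 2 := by
        exact_mod_cast Polynomial.degree_X_pow_add_C (by norm_num) c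
      rw [hdeg] at this
      exact Polynomial.natDegree_le_iff_degree_le.mpr this
    have hge2 : 2 ≤ (minpoly ℚ u).natDegree := by
      rw [minpoly.two_le_natDegree_iff hint]
      rintro ⟨q0, hq0⟩
      exact hnotrange ⟨q0, hq0⟩
    omega
  haveI hfd : FiniteDimensional ℚ ℚ⟮u⟯ := adjoin.finiteDimensional hint
  have hfr : Module.finrank ℚ ℚ⟮u⟯ = 2 := by
    rw [adjoin.finrank hint, hmindeg]
  -- the span {1, u} equals ℚ⟮u⟯ as submodule
  have humem : u ∈ ℚ⟮u⟯ := mem_adjoin_simple_self ℚ u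
  have hli1u : LinearIndependent ℚ ![1, u] := by
    rw [LinearIndependent.pair_iff]
    intro a' b' hab'
    rw [hsm, hsm, mul_one] at hab'
    have hre : (a' : ℝ) + (b' : ℝ) * u.re = 0 := by
      have := congrArg Complex.re hab'
      simpa [Complex.add_re, Complex.mul_re] using this
    have him : (b' : ℝ) * t = 0 := by
      have := congrArg Complex.im hab'
      simpa [Complex.add_im, Complex.mul_im, hvim, ← ht] using this
    have hb0 : (b' : ℝ) = 0 := by
      rcases mul_eq_zero.mp him with h | h
      · exact h
      · exact absurd h htne
    have ha0 : (a' : ℝ) = 0 := by rw [hvim] at hre; linarith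
    exact ⟨by exact_mod_cast ha0, by exact_mod_cast hb0⟩
  have hspanK : Submodule.span ℚ ({1, u} : Set ℂ) =
      Subalgebra.toSubmodule ℚ⟮u⟯.toSubalgebra := by
    haveI : FiniteDimensional ℚ (Subalgebra.toSubmodule ℚ⟮u⟯.toSubalgebra) :=
      inferInstanceAs (FiniteDimensional ℚ ℚ⟮u⟯)
    apply Submodule.eq_of_le_of_finrank_eq
    · rw [Submodule.span_le]
      intro z hz
      rcases hz with rfl | hz
      · exact one_mem ℚ⟮u⟯
      · rcases hz with rfl; exact humem
    · rw [finrank_span_pair hli1u]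
      have : Module.finrank ℚ (Subalgebra.toSubmodule ℚ⟮u⟯.toSubalgebra) =
          Module.finrank ℚ ℚ⟮u⟯ := Subalgebra.finrank_toSubmodule ℚ⟮u⟯.toSubalgebra
      rw [this, hfr]
  -- conclusion
  refine ⟨v₁⁻¹, ℚ⟮u⟯.toSubfield, inv_ne_zero hv1ne, ?_, ⟨u, humem, htne⟩, ?_⟩
  · have : Module.finrank ℚ ℚ⟮u⟯ = 2 := hfr
    convert this using 2
    rfl
    exact Subsingleton.elim _ _
  · have himg : (fun z : ℂ => v₁⁻¹ * z) '' (V : Set ℂ) =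
        (Submodule.map (LinearMap.mulLeft ℚ v₁⁻¹) V : Set ℂ) := by
      simp [Submodule.map_coe, LinearMap.mulLeft_apply]
      rfl
    rw [himg, hVspan, Submodule.map_span]
    have himg2 : (LinearMap.mulLeft ℚ v₁⁻¹) '' ({v₁, v₂} : Set ℂ) = {1, u} := by
      rw [Set.image_insert_eq, Set.image_singleton]
      simp only [LinearMap.mulLeft_apply]
      rw [inv_mul_cancel₀ hv1ne]
      congr 1
      rw [hu, div_eq_inv_mul]
    rw [himg2, hspanK]
    rfl
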